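/- The 3×2×3 quaternion tensor T whose two frontal slices are the 3×3 identity matrix and the matrix [[0,0,1],[0,1,0],[0,0,0]] does not have rank at most 3; that is, T cannot be written as a sum of 3 simple tensors over ℍ (hence, combined with the bound rank ≤ 4 for all 3×2×3 quaternion tensors, T has rank exactly 4). -/

import Mathlib

open Matrix

lemma quat_matrix_mul_one_comm {n : ℕ} {P Q : Matrix (Fin n) (Fin n) (Quaternion ℝ)}
    (h : P * Q = 1) : Q * P = 1 := by
  have h1 : Q.vecMulLinear * P.vecMulLinear = 1 := by
    apply LinearMap.ext
    intro v
    simp [Matrix.vecMul_vecMul, h]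
  have h2 : P.vecMulLinear * Q.vecMulLinear = 1 := mul_eq_one_comm.mp h1
  apply Matrix.ext
  intro l k
  have h3 := congrFun (LinearMap.congr_fun h2 (Pi.single l 1)) k
  simpa [Matrix.vecMul_vecMul, Matrix.single_one_vecMul, Matrix.mul_apply,
    Matrix.vecMul, dotProduct, Matrix.one_apply, Pi.single_apply, eq_comm] using h3

lemma sandwich_mul {n : ℕ} {P Q X Y : Matrix (Fin n) (Fin n) (Quaternion ℝ)}
    (hQP : Q * P = 1) : (P * X * Q) * (P * Y * Q) = P * (X * Y) * Q := by
  calc (P * X * Q) * (P * Y * Q) = P * X * ((Q * P) * (Y * Q)) := by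
        simp only [mul_assoc]
    _ = P * (X * Y) * Q := by rw [hQP, one_mul]; simp only [mul_assoc]

lemma sandwich_cancel {n : ℕ} {P Q X Y : Matrix (Fin n) (Fin n) (Quaternion ℝ)}
    (_hPQ : P * Q = 1) (hQP : Q * P = 1) (h : P * X * Q = P * Y * Q) : X = Y := by
  have h2 : Q * (P * X * Q) * P = Q * (P * Y * Q) * P := by rw [h]
  calc X = (Q * P) * X * (Q * P) := by rw [hQP, one_mul, mul_one]
    _ = Q * (P * X * Q) * P := by simp only [mul_assoc]
    _ = Q * (P * Y * Q) * P := h2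
    _ = (Q * P) * Y * (Q * P) := by simp only [mul_assoc]
    _ = Y := by rw [hQP, one_mul, mul_one]


/-- An `n₁ × n₂ × n₃` quaternion tensor has rank at most `r` if it is a sum of
`r` simple tensors. -/
def HasRankLE {n₁ n₂ n₃ : ℕ} (r : ℕ) (T : Fin n₁ → Fin n₂ → Fin n₃ → Quaternion ℝ) : Prop :=
  ∃ (a : Fin r → Fin n₁ → Quaternion ℝ) (b : Fin r → Fin n₂ → Quaternion ℝ)
    (c : Fin r → Fin n₃ → Quaternion ℝ),
    ∀ i j k, T i j k = ∑ l : Fin r, a l i * b l j * c l k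

theorem not_rank_le_three_323 (T : Fin 3 → Fin 2 → Fin 3 → Quaternion ℝ)
    (hT : ∀ i j k, T i j k =
      if j = 0 then (1 : Matrix (Fin 3) (Fin 3) (Quaternion ℝ)) i k
      else !![(0 : Quaternion ℝ), 0, 1; 0, 1, 0; 0, 0, 0] i k) :
    ¬ HasRankLE 3 T := by
  rintro ⟨a, b, c, h⟩
  set N : Matrix (Fin 3) (Fin 3) (Quaternion ℝ) :=
    !![(0 : Quaternion ℝ), 0, 1; 0, 1, 0; 0, 0, 0] with hNdef
  have hI : ∀ i k, (1 : Matrix (Fin 3) (Fin 3) (Quaternion ℝ)) i k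
      = ∑ l : Fin 3, a l i * b l 0 * c l k := by
    intro i k
    have := (hT i 0 k).symm.trans (h i 0 k)
    simpa using this
  have hM : ∀ i k, N i k = ∑ l : Fin 3, a l i * b l 1 * c l k := by
    intro i k
    have := (hT i 1 k).symm.trans (h i 1 k)
    simpa using this
  set P : Matrix (Fin 3) (Fin 3) (Quaternion ℝ) := fun i l => a l i with hPdef
  set Q : Matrix (Fin 3) (Fin 3) (Quaternion ℝ) := fun l k => b l 0 * c l k with hQdef
  have hPQ : P * Q = 1 := by
    apply Matrix.ext
    intro i k
    rw [Matrix.mul_apply, hI i k]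
    exact Finset.sum_congr rfl fun l _ => by simp [hPdef, hQdef, mul_assoc]
  have hQP : Q * P = 1 := quat_matrix_mul_one_comm hPQ
  by_cases hb : ∀ l, b l 0 ≠ 0
  · -- all middle coefficients nonzero
    set e : Fin 3 → Quaternion ℝ := fun l => b l 1 * (b l 0)⁻¹ with hedef
    set E : Matrix (Fin 3) (Fin 3) (Quaternion ℝ) := Matrix.diagonal e with hEdef
    have hN : N = P * E * Q := by
      apply Matrix.ext
      intro i k
      rw [Matrix.mul_apply, hM i k]
      refine Finset.sum_congr rfl fun l _ => ?_
      rw [Matrix.mul_diagonal]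
      show a l i * b l 1 * c l k = P i l * e l * (b l 0 * c l k)
      rw [hedef, hPdef]
      simp only [mul_assoc]
      rw [inv_mul_cancel_left₀ (hb l)]
    have hNval : N * N = !![(0 : Quaternion ℝ), 0, 0; 0, 1, 0; 0, 0, 0] := by
      rw [hNdef, Matrix.mul_fin_three]
      norm_num
    have hNcube : N * N * N = N * N := by
      rw [hNval, hNdef, Matrix.mul_fin_three]
      norm_num
    have hsq : N * N = P * (E * E) * Q := by
      rw [hN]; exact sandwich_mul hQP
    have hcb : N * N * N = P * ((E * E) * E) * Q := by
      rw [hsq, hN]; exact sandwich_mul hQP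
    have h1 : P * ((E * E) * E) * Q = P * (E * E) * Q := by
      rw [← hcb, hNcube, hsq]
    have h2 : (E * E) * E = E * E := sandwich_cancel hPQ hQP h1
    have h3 : ∀ l, e l * e l * e l = e l * e l := by
      intro l
      have := congrFun (congrFun h2 l) l
      simpa [hEdef, Matrix.diagonal_mul_diagonal, Matrix.diagonal_apply_eq] using this
    have h4 : ∀ l, e l * e l = e l := by
      intro l
      have h5 : (e l * e l) * (e l - 1) = 0 := by
        rw [mul_sub, mul_one, h3 l, sub_self]
      rcases mul_eq_zero.mp h5 with h6 | h6
      · rcases mul_eq_zero.mp h6 with h7 | h7 <;> rw [h7] <;> simp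
      · rw [sub_eq_zero.mp h6]; simp
    have hEE : E * E = E := by
      rw [hEdef, Matrix.diagonal_mul_diagonal]
      exact congrArg Matrix.diagonal (funext fun l => h4 l)
    have hNN : N * N = N := by
      rw [hN, sandwich_mul hQP, hEE]
    have hcontra : (0 : Quaternion ℝ) = 1 := by
      have := congrFun (congrFun (hNval.symm.trans hNN) 0) 2
      simpa [hNdef] using this
    exact one_ne_zero hcontra.symm
  · -- some middle coefficient is zero
    push_neg at hb
    obtain ⟨l₀, hl₀⟩ := hb
    have h0 : (Q * P) l₀ l₀ = 0 := by
      rw [Matrix.mul_apply]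
      apply Finset.sum_eq_zero
      intro m _
      show b l₀ 0 * c l₀ m * P m l₀ = 0
      rw [hl₀, zero_mul, zero_mul]
    rw [hQP] at h0
    simp [Matrix.one_apply] at h0
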